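/- If two selection matrices Q₁ and Q₂ select disjoint index sets and the matrix A satisfies Q₁ A Q₂ᵀ = 0 (no coupling between the two index sets), then the corresponding local solver updates commute: applying the update for patch 1 and then patch 2 gives the same result as the reverse order. -/

import Mathlib

open Matrix

/-- If two selection matrices select disjoint index sets and `Q₁ A Q₂ᵀ = 0`, then the
corresponding local solver updates commute. -/
theorem local_solvers_commute {n k₁ k₂ : ℕ}
    (A : Matrix (Fin n) (Fin n) ℝ) (hA : A.PosDef) (b : Fin n → ℝ)
    (σ₁ : Fin k₁ → Fin n) (hσ₁ : Function.Injective σ₁)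
    (σ₂ : Fin k₂ → Fin n) (hσ₂ : Function.Injective σ₂)
    (hdisj : ∀ i j, σ₁ i ≠ σ₂ j)
    (Q₁ : Matrix (Fin k₁) (Fin n) ℝ) (hQ₁ : ∀ i j, Q₁ i j = if j = σ₁ i then 1 else 0)
    (Q₂ : Matrix (Fin k₂) (Fin n) ℝ) (hQ₂ : ∀ i j, Q₂ i j = if j = σ₂ i then 1 else 0)
    (hcoupling : Q₁ * A * Q₂ᵀ = 0)
    (S₁ S₂ : (Fin n → ℝ) → (Fin n → ℝ))
    (hS₁ : ∀ x, S₁ x = x - Q₁ᵀ *ᵥ ((Q₁ * A * Q₁ᵀ)⁻¹ *ᵥ (Q₁ *ᵥ (A *ᵥ x - b))))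
    (hS₂ : ∀ x, S₂ x = x - Q₂ᵀ *ᵥ ((Q₂ * A * Q₂ᵀ)⁻¹ *ᵥ (Q₂ *ᵥ (A *ᵥ x - b)))) :
    ∀ x, S₂ (S₁ x) = S₁ (S₂ x) := by
  have hsym : Aᵀ = A := by
    have := hA.isHermitian
    simpa [Matrix.IsHermitian, Matrix.conjTranspose_eq_transpose_of_trivial] using this
  have h21 : Q₂ * A * Q₁ᵀ = 0 := by
    have := congrArg Matrix.transpose hcoupling
    simpa [Matrix.transpose_mul, Matrix.transpose_transpose, hsym, Matrix.mul_assoc] using this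
  have z1 : ∀ w : Fin k₁ → ℝ, Q₂ *ᵥ (A *ᵥ (Q₁ᵀ *ᵥ w)) = 0 := by
    intro w
    rw [Matrix.mulVec_mulVec, Matrix.mulVec_mulVec, h21, Matrix.zero_mulVec]
  have z2 : ∀ w : Fin k₂ → ℝ, Q₁ *ᵥ (A *ᵥ (Q₂ᵀ *ᵥ w)) = 0 := by
    intro w
    rw [Matrix.mulVec_mulVec, Matrix.mulVec_mulVec, hcoupling, Matrix.zero_mulVec]
  intro x
  rw [hS₂ (S₁ x), hS₁ (S₂ x), hS₁ x, hS₂ x]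
  have e1 : Q₂ *ᵥ (A *ᵥ (x - Q₁ᵀ *ᵥ ((Q₁ * A * Q₁ᵀ)⁻¹ *ᵥ (Q₁ *ᵥ (A *ᵥ x - b)))) - b)
      = Q₂ *ᵥ (A *ᵥ x - b) := by
    simp only [Matrix.mulVec_sub, Matrix.mulVec_add, z1]; abel
  have e2 : Q₁ *ᵥ (A *ᵥ (x - Q₂ᵀ *ᵥ ((Q₂ * A * Q₂ᵀ)⁻¹ *ᵥ (Q₂ *ᵥ (A *ᵥ x - b)))) - b)
      = Q₁ *ᵥ (A *ᵥ x - b) := by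
    simp only [Matrix.mulVec_sub, Matrix.mulVec_add, z2]; abel
  rw [e1, e2]
  abel
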